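/- (Theorem 1, factorized form.) Assume the constant coefficient α_0 = 0. Define the reconstructed matrix R* = [P(Ã)E]_U · ([P(Ã)E]_I)ᵀ ∈ ℝ^{m×n}, where P(Ã) = Σ_{k=0}^K α_k Ã^k, and [·]_U and [·]_I denote the top m rows and bottom n rows respectively. Then there exist matrices L, V ∈ ℝ^{n×d}, each a linear combination (with coefficients depending only on α_0, …, α_K) of the matrices G̃_I^k · E_I and G̃_I^k · R̃ᵀ · E_U for 0 ≤ k ≤ K, such that R* = R̃ · L · Vᵀ. -/

import Mathlib

open Matrix

private lemma sum_range_split {M : Type*} [AddCommMonoid M] (N : ℕ) (f : ℕ → M) :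
    ∑ k ∈ Finset.range N, f k
      = (∑ j ∈ Finset.range N, if 2*j < N then f (2*j) else 0)
      + (∑ j ∈ Finset.range N, if 2*j+1 < N then f (2*j+1) else 0) := by
  rw [← Finset.sum_filter_add_sum_filter_not (Finset.range N) (fun k => Even k) f,
      ← Finset.sum_filter, ← Finset.sum_filter]
  congr 1
  · refine Finset.sum_nbij' (i := fun k => k / 2) (j := fun j => 2 * j) ?_ ?_ ?_ ?_ ?_
    · intro k hk
      simp only [Finset.mem_filter, Finset.mem_range] at hk ⊢
      obtain ⟨hk, t, ht⟩ := hk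
      omega
    · intro j hj
      simp only [Finset.mem_filter, Finset.mem_range] at hj ⊢
      exact ⟨by omega, ⟨j, by omega⟩⟩
    · intro k hk
      simp only [Finset.mem_filter, Finset.mem_range] at hk
      obtain ⟨hk, t, ht⟩ := hk; omega
    · intro j hj; omega
    · intro k hk
      simp only [Finset.mem_filter, Finset.mem_range] at hk
      obtain ⟨hk, t, ht⟩ := hk
      congr 1; omega
  · refine Finset.sum_nbij' (i := fun k => k / 2) (j := fun j => 2 * j + 1) ?_ ?_ ?_ ?_ ?_
    · intro k hk
      simp only [Finset.mem_filter, Finset.mem_range, Nat.not_even_iff_odd] at hk ⊢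
      obtain ⟨hk, t, ht⟩ := hk; omega
    · intro j hj
      simp only [Finset.mem_filter, Finset.mem_range, Nat.not_even_iff_odd] at hj ⊢
      exact ⟨by omega, ⟨j, by omega⟩⟩
    · intro k hk
      simp only [Finset.mem_filter, Finset.mem_range, Nat.not_even_iff_odd] at hk
      obtain ⟨hk, t, ht⟩ := hk; omega
    · intro j hj; omega
    · intro k hk
      simp only [Finset.mem_filter, Finset.mem_range, Nat.not_even_iff_odd] at hk
      obtain ⟨hk, t, ht⟩ := hk
      congr 1; omega

private lemma mul_pow_shift {α : Type*} [Monoid α] (a b : α) (j : ℕ) :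
    (a * b) ^ j * a = a * (b * a) ^ j := by
  induction j with
  | zero => simp
  | succ k ih =>
    rw [pow_succ, pow_succ, mul_assoc ((a*b)^k), mul_assoc a b a, ← mul_assoc ((a*b)^k) a,
      ih, mul_assoc]

private lemma blockpow_even {m n : ℕ} (R : Matrix (Fin m) (Fin n) ℝ) (j : ℕ) :
    (fromBlocks 0 R Rᵀ 0 : Matrix (Fin m ⊕ Fin n) (Fin m ⊕ Fin n) ℝ) ^ (2*j)
      = fromBlocks ((R*Rᵀ)^j) 0 0 ((Rᵀ*R)^j) := by
  induction j with
  | zero => simp [fromBlocks_one]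
  | succ k ih =>
    rw [show 2*(k+1) = 2*k + 1 + 1 by ring, pow_succ, pow_succ, ih]
    simp [fromBlocks_multiply, pow_succ, Matrix.mul_assoc]

private lemma blockpow_odd {m n : ℕ} (R : Matrix (Fin m) (Fin n) ℝ) (j : ℕ) :
    (fromBlocks 0 R Rᵀ 0 : Matrix (Fin m ⊕ Fin n) (Fin m ⊕ Fin n) ℝ) ^ (2*j+1)
      = fromBlocks 0 ((R*Rᵀ)^j*R) ((Rᵀ*R)^j*Rᵀ) 0 := by
  rw [pow_succ, blockpow_even]
  simp [fromBlocks_multiply]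

private lemma pow_shift {m n : ℕ} (R : Matrix (Fin m) (Fin n) ℝ) (j : ℕ) :
    (R * Rᵀ) ^ j * R = R * (Rᵀ * R) ^ j := by
  induction j with
  | zero => simp
  | succ k ih =>
    rw [pow_succ, Matrix.mul_assoc, Matrix.mul_assoc R Rᵀ R, ← Matrix.mul_assoc, ih,
      Matrix.mul_assoc, ← pow_succ]

private lemma pow_shift_even {m n d : ℕ} (R : Matrix (Fin m) (Fin n) ℝ)
    (EU : Matrix (Fin m) (Fin d) ℝ) (j : ℕ) :
    (R * Rᵀ) ^ (j+1) * EU = R * ((Rᵀ * R) ^ j * (Rᵀ * EU)) := by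
  rw [pow_succ, Matrix.mul_assoc, Matrix.mul_assoc R Rᵀ EU, ← Matrix.mul_assoc, pow_shift,
    Matrix.mul_assoc]

private lemma toRows₁_sum {m₁ m₂ n : ℕ} {ι : Type*} (s : Finset ι)
    (M : ι → Matrix (Fin m₁ ⊕ Fin m₂) (Fin n) ℝ) :
    toRows₁ (∑ k ∈ s, M k) = ∑ k ∈ s, toRows₁ (M k) := by
  ext i j
  simp [Matrix.toRows₁, Matrix.sum_apply]

private lemma toRows₂_sum {m₁ m₂ n : ℕ} {ι : Type*} (s : Finset ι)
    (M : ι → Matrix (Fin m₁ ⊕ Fin m₂) (Fin n) ℝ) :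
    toRows₂ (∑ k ∈ s, M k) = ∑ k ∈ s, toRows₂ (M k) := by
  ext i j
  simp [Matrix.toRows₂, Matrix.sum_apply]

private lemma toRows₁_smul {m₁ m₂ n : ℕ} (c : ℝ) (M : Matrix (Fin m₁ ⊕ Fin m₂) (Fin n) ℝ) :
    toRows₁ (c • M) = c • toRows₁ M := by
  ext i j; simp [Matrix.toRows₁]

private lemma toRows₂_smul {m₁ m₂ n : ℕ} (c : ℝ) (M : Matrix (Fin m₁ ⊕ Fin m₂) (Fin n) ℝ) :
    toRows₂ (c • M) = c • toRows₂ M := by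
  ext i j; simp [Matrix.toRows₂]

/-- Theorem 1 (factorized form): assuming the constant coefficient `α_0 = 0`, for the
polynomial graph filter `P(Ã) = Σ_{k=0}^K α_k Ã^k` applied to embeddings `E = [E_U; E_I]`
with reconstruction `R* = [P(Ã)E]_U ([P(Ã)E]_I)ᵀ`, there exist matrices `L, V ∈ ℝ^{n×d}`,
each a linear combination (with coefficients determined only by `α_0, …, α_K`) of the
matrices `G̃_I^k E_I` and `G̃_I^k R̃ᵀ E_U` for `0 ≤ k ≤ K`, such that `R* = R̃ L Vᵀ`. -/
theorem reconstruction_factorization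
    (K : ℕ) (α : ℕ → ℝ) (hα : α 0 = 0) :
    ∃ a b a' b' : ℕ → ℝ,
      ∀ (m n d : ℕ), 0 < m → 0 < n → 0 < d →
      ∀ (R : Matrix (Fin m) (Fin n) ℝ)
        (EU : Matrix (Fin m) (Fin d) ℝ) (EI : Matrix (Fin n) (Fin d) ℝ),
      let P := ∑ k ∈ Finset.range (K + 1), α k • (fromBlocks 0 R Rᵀ 0) ^ k
      let L := (∑ k ∈ Finset.range (K + 1), a k • ((Rᵀ * R) ^ k * EI))
             + (∑ k ∈ Finset.range (K + 1), b k • ((Rᵀ * R) ^ k * Rᵀ * EU))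
      let V := (∑ k ∈ Finset.range (K + 1), a' k • ((Rᵀ * R) ^ k * EI))
             + (∑ k ∈ Finset.range (K + 1), b' k • ((Rᵀ * R) ^ k * Rᵀ * EU))
      toRows₁ (P * fromRows EU EI) * (toRows₂ (P * fromRows EU EI))ᵀ
        = R * L * Vᵀ := by
  refine ⟨fun k => if 2*k+1 ≤ K then α (2*k+1) else 0,
          fun k => if 2*k+2 ≤ K then α (2*k+2) else 0,
          fun k => if 2*k ≤ K then α (2*k) else 0,
          fun k => if 2*k+1 ≤ K then α (2*k+1) else 0, ?_⟩
  intro m n d hm hn hd R EU EI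
  intro P L V
  have hPF : P * fromRows EU EI
      = ∑ k ∈ Finset.range (K+1),
          α k • ((fromBlocks 0 R Rᵀ 0) ^ k * fromRows EU EI) := by
    simp only [P, Matrix.sum_mul, Matrix.smul_mul]
  -- the top rows
  have hTop : toRows₁ (P * fromRows EU EI) = R * L := by
    rw [hPF, toRows₁_sum]
    simp only [toRows₁_smul]
    rw [sum_range_split]
    have he : ∀ j : ℕ,
        toRows₁ ((fromBlocks 0 R Rᵀ 0 : Matrix (Fin m ⊕ Fin n) (Fin m ⊕ Fin n) ℝ) ^ (2*j)
            * fromRows EU EI) = (R*Rᵀ)^j * EU := by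
      intro j
      rw [blockpow_even, fromBlocks_mul_fromRows, toRows₁_fromRows]
      simp
    have ho : ∀ j : ℕ,
        toRows₁ ((fromBlocks 0 R Rᵀ 0 : Matrix (Fin m ⊕ Fin n) (Fin m ⊕ Fin n) ℝ) ^ (2*j+1)
            * fromRows EU EI) = R * ((Rᵀ*R)^j * EI) := by
      intro j
      rw [blockpow_odd, fromBlocks_mul_fromRows, toRows₁_fromRows, Matrix.zero_mul, zero_add,
        pow_shift, Matrix.mul_assoc]
    simp only [he, ho]
    have hRL : R * L
        = (∑ j ∈ Finset.range (K + 1),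
            (if 2*j+1 ≤ K then α (2*j+1) else 0) • (R * ((Rᵀ * R) ^ j * EI)))
        + (∑ j ∈ Finset.range (K + 1),
            (if 2*j+2 ≤ K then α (2*j+2) else 0) • (R * ((Rᵀ * R) ^ j * (Rᵀ * EU)))) := by
      simp only [L, Matrix.mul_add, Matrix.mul_sum, Matrix.mul_smul, Matrix.mul_assoc]
    rw [hRL]
    simp only [ite_smul, zero_smul]
    rw [add_comm (∑ j ∈ Finset.range (K + 1),
          if 2*j+1 ≤ K then α (2*j+1) • (R * ((Rᵀ * R) ^ j * EI)) else 0)]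
    congr 1
    · -- even part
      conv_lhs => rw [Finset.sum_range_succ']
      conv_rhs => rw [Finset.sum_range_succ]
      congr 1
      · refine Finset.sum_congr rfl ?_
        intro j hj
        have hidx : 2*(j+1) = 2*j+2 := by ring
        rw [hidx, pow_shift_even]
        simp only [Nat.lt_succ_iff]
      · rw [if_neg (by omega : ¬ 2*K+2 ≤ K)]
        simp [hα]
    · -- odd part
      refine Finset.sum_congr rfl ?_
      intro j hj
      simp only [Nat.lt_succ_iff]
  -- the bottom rows
  have hBot : toRows₂ (P * fromRows EU EI) = V := by
    rw [hPF, toRows₂_sum]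
    simp only [toRows₂_smul]
    rw [sum_range_split]
    have he : ∀ j : ℕ,
        toRows₂ ((fromBlocks 0 R Rᵀ 0 : Matrix (Fin m ⊕ Fin n) (Fin m ⊕ Fin n) ℝ) ^ (2*j)
            * fromRows EU EI) = (Rᵀ*R)^j * EI := by
      intro j
      rw [blockpow_even, fromBlocks_mul_fromRows, toRows₂_fromRows]
      simp
    have ho : ∀ j : ℕ,
        toRows₂ ((fromBlocks 0 R Rᵀ 0 : Matrix (Fin m ⊕ Fin n) (Fin m ⊕ Fin n) ℝ) ^ (2*j+1)
            * fromRows EU EI) = (Rᵀ*R)^j * Rᵀ * EU := by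
      intro j
      rw [blockpow_odd, fromBlocks_mul_fromRows, toRows₂_fromRows]
      simp [Matrix.mul_assoc]
    simp only [he, ho]
    simp only [V, ite_smul, zero_smul, Nat.lt_succ_iff]
  rw [hTop, hBot]
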